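/- Let V be a vector space over a field of characteristic 0, w: T(V) → T(V) the linear map acting on the degree-n component V^{⊗n} as the left-normed bracketing map v₁⊗···⊗vₙ ↦ [...[v₁,v₂],...,vₙ]. Then the sequence 0 → Lₙ(V) → V^{⊗n} → V^{⊗n} is exact, where the second map is the inclusion of the degree-n part of the free Lie algebra and the third map is n·id − w; in particular (1/n)·w restricted to V^{⊗n} is a projection onto Lₙ(V). -/

import Mathlib

/-- The left-normed iterated commutator `[...[[a₁,a₂],a₃],...,aₙ]` of a list,
with `[a,b] = a*b - b*a`; `0` for the empty list. -/
def lnbList {A : Type*} [Ring A] : List A → A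
  | [] => 0
  | a :: l => l.foldl (fun x y => x * y - y * x) a

attribute [local instance] LieRing.ofAssociativeRing

set_option maxRecDepth 10000
set_option maxHeartbeats 1000000

namespace DSW
open TensorAlgebra MulOpposite
variable {k : Type*} [Field k] {V : Type*} [AddCommGroup V] [Module k V]
local notation "T" => TensorAlgebra k V

noncomputable def Gv (v : V) : Module.End k (T × T × T) where
  toFun p := (p.1 * ι k v,
    p.2.1 * ι k v - ι k v * p.2.1 + algebraMapInv p.1 • ι k v,
    p.2.2 * ι k v + p.1 * ι k v)
  map_add' p q := by
    simp only [Prod.fst_add, Prod.snd_add, map_add, add_smul, add_mul, mul_add, Prod.mk_add_mk]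
    refine Prod.ext rfl (Prod.ext ?_ ?_) <;> dsimp <;> abel
  map_smul' c p := by
    simp only [Prod.smul_fst, Prod.smul_snd, map_smul, smul_eq_mul, mul_smul, smul_mul_assoc,
      mul_smul_comm, Prod.smul_mk, RingHom.id_apply, smul_sub, smul_add]

lemma Gv_apply (v : V) (p : T × T × T) : Gv v p = (p.1 * ι k v,
    p.2.1 * ι k v - ι k v * p.2.1 + algebraMapInv p.1 • ι k v,
    p.2.2 * ι k v + p.1 * ι k v) := rfl

lemma Gv_add (v w : V) : Gv (k := k) (v + w) = Gv v + Gv w := by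
  apply LinearMap.ext; intro p
  rw [LinearMap.add_apply, Gv_apply, Gv_apply, Gv_apply]
  refine Prod.ext ?_ (Prod.ext ?_ ?_) <;>
    simp only [map_add, mul_add, add_mul, add_smul, smul_add, Prod.mk_add_mk, Prod.fst_add, Prod.snd_add] <;>
    abel

lemma Gv_smul (c : k) (v : V) : Gv (k := k) (c • v) = c • Gv v := by
  apply LinearMap.ext; intro p
  rw [LinearMap.smul_apply, Gv_apply, Gv_apply]
  refine Prod.ext ?_ (Prod.ext ?_ ?_) <;>
    simp only [map_smul, mul_smul_comm, smul_mul_assoc, Prod.smul_mk, Prod.smul_fst,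
      Prod.smul_snd, smul_sub, smul_add, smul_smul, smul_eq_mul, mul_comm]


noncomputable def G : V →ₗ[k] (Module.End k (T × T × T))ᵐᵒᵖ where
  toFun v := op (Gv v)
  map_add' v w := by rw [Gv_add, op_add]
  map_smul' c v := by rw [Gv_smul, op_smul, RingHom.id_apply]

noncomputable def Psi : TensorAlgebra k V →ₐ[k] (Module.End k (T × T × T))ᵐᵒᵖ :=
  TensorAlgebra.lift k G

lemma Psi_ι (v : V) : Psi (ι k v : T) = op (Gv v) := by
  simp only [Psi]
  rw [TensorAlgebra.lift_ι_apply]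
  rfl

lemma unop_Psi_mul_ι (x : T) (v : V) :
    (Psi (x * ι k v)).unop = (Gv v) ∘ₗ (Psi x).unop := by
  rw [map_mul, Psi_ι, unop_mul, unop_op]
  rfl

lemma fst_Psi (y : T) : ∀ p : T × T × T, ((Psi y).unop p).1 = p.1 * y := by
  induction y using TensorAlgebra.induction with
  | algebraMap r =>
      intro p
      rw [AlgHom.commutes]
      show ((r • (1 : Module.End k (T × T × T))) p).1 = _
      rw [LinearMap.smul_apply, Prod.smul_fst, Module.End.one_apply,
        Algebra.smul_def, Algebra.commutes]
  | ι v => intro p; rw [Psi_ι, unop_op, Gv_apply]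
  | mul a b ha hb =>
      intro p
      rw [map_mul, unop_mul, Module.End.mul_apply, hb, ha, mul_assoc]
  | add a b ha hb =>
      intro p
      rw [map_add, unop_add, LinearMap.add_apply, Prod.fst_add, ha, hb, mul_add]


noncomputable def theta : TensorAlgebra k V →ₗ[k] TensorAlgebra k V where
  toFun x := ((Psi x).unop (1,0,0)).2.1
  map_add' x y := by
    rw [map_add, unop_add, LinearMap.add_apply, Prod.snd_add, Prod.fst_add]
  map_smul' c x := by
    rw [map_smul, unop_smul, LinearMap.smul_apply, Prod.smul_snd, Prod.smul_fst,
      RingHom.id_apply]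

noncomputable def Dd : TensorAlgebra k V →ₗ[k] TensorAlgebra k V where
  toFun x := ((Psi x).unop (1,0,0)).2.2
  map_add' x y := by
    rw [map_add, unop_add, LinearMap.add_apply, Prod.snd_add, Prod.snd_add]
  map_smul' c x := by
    rw [map_smul, unop_smul, LinearMap.smul_apply, Prod.smul_snd, Prod.smul_snd,
      RingHom.id_apply]

lemma fst_Psi_one (x : T) : ((Psi x).unop ((1,0,0) : T × T × T)).1 = x := by
  rw [fst_Psi]; exact one_mul x

lemma eps_ι (v : V) : algebraMapInv (ι k v : T) = 0 := by
  simp [algebraMapInv]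

lemma theta_mul_ι (x : T) (v : V) :
    theta (x * ι k v) = ⁅theta x, ι k v⁆ + algebraMapInv x • ι k v := by
  show ((Psi (x * ι k v)).unop (1,0,0)).2.1 = _
  rw [unop_Psi_mul_ι, LinearMap.comp_apply, Gv_apply, fst_Psi_one, Ring.lie_def]
  rfl

lemma Dd_mul_ι (x : T) (v : V) :
    Dd (x * ι k v) = Dd x * ι k v + x * ι k v := by
  show ((Psi (x * ι k v)).unop (1,0,0)).2.2 = _
  rw [unop_Psi_mul_ι, LinearMap.comp_apply, Gv_apply, fst_Psi_one]
  rfl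

lemma theta_algebraMap (r : k) : theta (algebraMap k (TensorAlgebra k V) r) = 0 := by
  show ((Psi (algebraMap k (TensorAlgebra k V) r)).unop (1,0,0)).2.1 = 0
  rw [AlgHom.commutes]
  show ((r • (1 : Module.End k (T × T × T))) (1,0,0)).2.1 = 0
  rw [LinearMap.smul_apply, Module.End.one_apply, Prod.smul_snd, Prod.smul_fst, smul_zero]

lemma Dd_algebraMap (r : k) : Dd (algebraMap k (TensorAlgebra k V) r) = 0 := by
  show ((Psi (algebraMap k (TensorAlgebra k V) r)).unop (1,0,0)).2.2 = 0
  rw [AlgHom.commutes]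
  show ((r • (1 : Module.End k (T × T × T))) (1,0,0)).2.2 = 0
  rw [LinearMap.smul_apply, Module.End.one_apply, Prod.smul_snd, Prod.smul_snd, smul_zero]

lemma theta_one : theta (1 : T) = 0 := by
  rw [← map_one (algebraMap k (TensorAlgebra k V))]; exact theta_algebraMap 1

lemma theta_ι (v : V) : theta (ι k v : T) = ι k v := by
  have := theta_mul_ι (1 : T) v
  rwa [one_mul, theta_one, zero_lie, zero_add, map_one, one_smul] at this

lemma Dd_ι (v : V) : Dd (ι k v : T) = ι k v := by
  have := Dd_mul_ι (1 : T) v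
  rwa [one_mul, Dd_algebraMap' , zero_mul, zero_add] at this
where
  Dd_algebraMap' : Dd (1 : T) = 0 := by
    rw [← map_one (algebraMap k (TensorAlgebra k V))]; exact Dd_algebraMap 1

lemma Dd_mul (y x : T) : Dd (x * y) = Dd x * y + x * Dd y := by
  induction y using TensorAlgebra.induction generalizing x with
  | algebraMap r =>
      rw [Dd_algebraMap, mul_zero, add_zero, ← Algebra.commutes, ← Algebra.smul_def,
        map_smul, Algebra.smul_def, Algebra.commutes]
  | ι v => rw [Dd_mul_ι, Dd_ι]
  | mul a b ha hb =>
      rw [← mul_assoc, hb, ha, add_mul, mul_assoc, mul_assoc, hb, mul_add, add_assoc,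
        mul_assoc]
  | add a b ha hb =>
      rw [mul_add, map_add, ha, hb, map_add, mul_add]
      noncomm_ring


local notation "LS" => LieSubalgebra.lieSpan k (TensorAlgebra k V) (Set.range (ι k (M := V)))

noncomputable def epsKer : LieSubalgebra k (TensorAlgebra k V) :=
  { LinearMap.ker (algebraMapInv (R := k) (M := V)).toLinearMap with
    lie_mem' := by
      intro x y _ _
      show x * y - y * x ∈ LinearMap.ker (algebraMapInv (R := k) (M := V)).toLinearMap
      rw [LinearMap.mem_ker, AlgHom.toLinearMap_apply, map_sub, map_mul, map_mul,
        mul_comm, sub_self] }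

lemma eps_lieSpan : ∀ u ∈ LS, algebraMapInv u = 0 := by
  intro u hu
  have h : LS ≤ epsKer := by
    rw [LieSubalgebra.lieSpan_le]
    rintro _ ⟨v, rfl⟩
    exact eps_ι v
  exact h hu

noncomputable def SA : LieSubalgebra k (TensorAlgebra k V) where
  carrier := {a | ∀ x : T, algebraMapInv x = 0 → theta (x * a) = ⁅theta x, a⁆}
  add_mem' := by
    intro a b ha hb x hx
    rw [mul_add, map_add, ha x hx, hb x hx, lie_add]
  zero_mem' := by
    intro x hx
    rw [mul_zero, map_zero, lie_zero]
  smul_mem' := by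
    intro c a ha x hx
    rw [mul_smul_comm, map_smul, ha x hx, lie_smul]
  lie_mem' := by
    intro a b ha hb x hx
    have hxa : algebraMapInv (x * a) = 0 := by rw [map_mul, hx, zero_mul]
    have hxb : algebraMapInv (x * b) = 0 := by rw [map_mul, hx, zero_mul]
    have key : x * ⁅a, b⁆ = (x * a) * b - (x * b) * a := by
      rw [Ring.lie_def, mul_sub, mul_assoc, mul_assoc]
    rw [key, map_sub, hb (x * a) hxa, ha (x * b) hxb, ha x hx, hb x hx]
    simp only [Ring.lie_def]
    noncomm_ring

lemma theta_mul_lie : ∀ a ∈ LS, ∀ x : T, algebraMapInv x = 0 →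
    theta (x * a) = ⁅theta x, a⁆ := by
  intro a ha
  have h : LS ≤ SA := by
    rw [LieSubalgebra.lieSpan_le]
    rintro _ ⟨v, rfl⟩ x hx
    rw [theta_mul_ι, hx, zero_smul, add_zero]
  exact h ha

noncomputable def SB : LieSubalgebra k (TensorAlgebra k V) where
  carrier := {u | u ∈ LS ∧ theta u = Dd u}
  add_mem' := by
    rintro a b ⟨ha1, ha2⟩ ⟨hb1, hb2⟩
    exact ⟨add_mem ha1 hb1, by rw [map_add, map_add, ha2, hb2]⟩
  zero_mem' := ⟨zero_mem _, by rw [map_zero, map_zero]⟩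
  smul_mem' := by
    rintro c a ⟨ha1, ha2⟩
    exact ⟨(LieSubalgebra.lieSpan k (TensorAlgebra k V) _).smul_mem c ha1, by rw [map_smul, map_smul, ha2]⟩
  lie_mem' := by
    rintro a b ⟨ha1, ha2⟩ ⟨hb1, hb2⟩
    refine ⟨(LieSubalgebra.lieSpan k (TensorAlgebra k V) _).lie_mem ha1 hb1, ?_⟩
    have hεa : algebraMapInv a = 0 := eps_lieSpan a ha1
    have hεb : algebraMapInv b = 0 := eps_lieSpan b hb1
    rw [Ring.lie_def, map_sub, theta_mul_lie b hb1 a hεa, theta_mul_lie a ha1 b hεb,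
      map_sub, Dd_mul b a, Dd_mul a b, ha2, hb2]
    simp only [Ring.lie_def]
    noncomm_ring

lemma theta_eq_Dd : ∀ u ∈ LS, theta u = Dd u := by
  intro u hu
  have h : LS ≤ SB := by
    rw [LieSubalgebra.lieSpan_le]
    rintro _ ⟨v, rfl⟩
    exact ⟨LieSubalgebra.subset_lieSpan ⟨v, rfl⟩, by rw [theta_ι, Dd_ι]⟩
  exact (h hu).2

lemma Dd_pow {m : ℕ} (x : T) (hx : x ∈ (LinearMap.range (ι k (M := V)) ^ m :
    Submodule k (TensorAlgebra k V))) : Dd x = (m : k) • x := by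
  induction hx using Submodule.pow_induction_on_left' with
  | algebraMap r => rw [Dd_algebraMap, Nat.cast_zero, zero_smul]
  | add x y i hx hy ihx ihy => rw [map_add, ihx, ihy, smul_add]
  | mem_mul m hm i z hz ihz =>
      obtain ⟨v, rfl⟩ := hm
      rw [Dd_mul, Dd_ι, ihz, mul_smul_comm, Nat.cast_succ, add_smul, one_smul, add_comm]


noncomputable def genSet (m : ℕ) : Set (TensorAlgebra k V) :=
  {z | ∃ v : Fin m → V, z = (List.ofFn fun i => ι k (v i)).prod}

lemma pow_le_span : ∀ m : ℕ, (LinearMap.range (ι k (M := V)) ^ m :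
    Submodule k (TensorAlgebra k V)) ≤ Submodule.span k (genSet m)
  | 0 => by
      rw [pow_zero, Submodule.one_eq_span]
      apply Submodule.span_mono
      rintro z rfl
      exact ⟨Fin.elim0, by rw [List.ofFn_zero, List.prod_nil]⟩
  | m + 1 => by
      rw [pow_succ]
      refine Submodule.mul_le.mpr fun a ha b hb => ?_
      obtain ⟨v, rfl⟩ := hb
      have ha' : a ∈ Submodule.span k (genSet m) := pow_le_span m ha
      refine Submodule.span_induction ?_ ?_ ?_ ?_ ha'
      · rintro z ⟨u, rfl⟩
        refine Submodule.subset_span ⟨Fin.snoc u v, ?_⟩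
        rw [List.ofFn_succ' (fun i => ι k (Fin.snoc u v i))]
        simp only [Fin.snoc_castSucc, Fin.snoc_last, List.prod_concat]
      · rw [zero_mul]; exact zero_mem _
      · intro y z _ _ hy hz; rw [add_mul]; exact add_mem hy hz
      · intro c y _ hy; rw [smul_mul_assoc]; exact Submodule.smul_mem _ c hy

lemma theta_foldl : ∀ (l : List V) (a : T), algebraMapInv a = 0 →
    theta (a * (l.map (ι k)).prod) = l.foldl (fun x v => ⁅x, ι k v⁆) (theta a)
  | [], a, _ => by rw [List.map_nil, List.prod_nil, mul_one, List.foldl_nil]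
  | v :: l, a, ha => by
      rw [List.map_cons, List.prod_cons, ← mul_assoc, List.foldl_cons,
        theta_foldl l (a * ι k v) (by rw [map_mul, ha, zero_mul]),
        theta_mul_ι, ha, zero_smul, add_zero]

lemma foldl_mem_lieSpan (l : List V) : ∀ a : T, a ∈ LS →
    l.foldl (fun x v => ⁅x, ι k v⁆) a ∈ LS := by
  induction l with
  | nil => exact fun a ha => ha
  | cons v l ih =>
      intro a ha
      exact ih _ ((LieSubalgebra.lieSpan k (TensorAlgebra k V) _).lie_mem ha
        (LieSubalgebra.subset_lieSpan ⟨v, rfl⟩))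

lemma foldl_mem_pow (l : List V) : ∀ (m : ℕ) (a : T),
    a ∈ (LinearMap.range (ι k (M := V)) ^ m : Submodule k (TensorAlgebra k V)) →
    l.foldl (fun x v => ⁅x, ι k v⁆) a ∈
      (LinearMap.range (ι k (M := V)) ^ (m + l.length) :
        Submodule k (TensorAlgebra k V)) := by
  induction l with
  | nil => exact fun m a ha => by simpa using ha
  | cons v l ih =>
      intro m a ha
      have h1 : ⁅a, ι k v⁆ ∈ (LinearMap.range (ι k (M := V)) ^ (m + 1) :
          Submodule k (TensorAlgebra k V)) := by
        rw [Ring.lie_def]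
        refine sub_mem ?_ ?_
        · rw [pow_succ]
          exact Submodule.mul_mem_mul ha (LinearMap.mem_range_self _ v)
        · rw [pow_succ']
          exact Submodule.mul_mem_mul (LinearMap.mem_range_self _ v) ha
      have := ih (m + 1) _ h1
      rw [List.length_cons, List.foldl_cons]
      convert this using 2
      omega

lemma gen_eq {m : ℕ} (v : Fin (m + 1) → V) :
    (List.ofFn fun i => ι k (v i)).prod =
      ι k (v 0) * ((List.ofFn fun i : Fin m => v i.succ).map (ι k)).prod := by
  rw [List.ofFn_succ, List.prod_cons, List.map_ofFn]
  rfl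

lemma theta_gen {m : ℕ} (v : Fin (m + 1) → V) :
    theta ((List.ofFn fun i => ι k (v i)).prod) =
      (List.ofFn fun i : Fin m => v i.succ).foldl (fun x u => ⁅x, ι k u⁆) (ι k (v 0)) := by
  rw [gen_eq, theta_foldl _ _ (eps_ι (v 0)), theta_ι]

lemma lnb_gen {m : ℕ} (v : Fin (m + 1) → V) :
    lnbList (List.ofFn fun i => ι k (v i)) =
      (List.ofFn fun i : Fin m => v i.succ).foldl (fun x u => ⁅x, ι k u⁆) (ι k (v 0)) := by
  rw [List.ofFn_succ]
  show (List.ofFn fun i : Fin m => ι k (v i.succ)).foldl (fun x y => x * y - y * x)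
      (ι k (v 0)) = _
  have : (List.ofFn fun i : Fin m => ι k (v i.succ)) =
      (List.ofFn fun i : Fin m => v i.succ).map (ι k) := by
    rw [List.map_ofFn]; rfl
  rw [this, List.foldl_map]
  simp only [Ring.lie_def]

end DSW

open DSW

/-- Let `w` act on `V^{⊗n} ⊆ T(V)` as the left-normed bracketing map.  Then
`0 → Lₙ(V) → V^{⊗n} → V^{⊗n}` is exact, the last map being `n·id − w`: for
`x ∈ V^{⊗n}`, `n·x − w x = 0` iff `x` lies in the free Lie algebra `L(V)` (so in its
degree-`n` part `Lₙ(V)`); in particular `(1/n)·w` is a projection of `V^{⊗n}` onto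
`Lₙ(V)`, i.e. `w x ∈ L(V)` and `w (w x) = n • w x`. -/
theorem stmt8 (k : Type*) [Field k] [CharZero k] (V : Type*) [AddCommGroup V] [Module k V]
    (n : ℕ) (hn : 0 < n)
    (w : TensorAlgebra k V →ₗ[k] TensorAlgebra k V)
    (hw : ∀ v : Fin n → V,
      w ((List.ofFn fun i => TensorAlgebra.ι k (v i)).prod) =
        lnbList (List.ofFn fun i => TensorAlgebra.ι k (v i))) :
    ∀ x ∈ (LinearMap.range (TensorAlgebra.ι k (M := V)) ^ n :
        Submodule k (TensorAlgebra k V)),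
      (((n : k) • x - w x = 0) ↔
        x ∈ LieSubalgebra.lieSpan k (TensorAlgebra k V)
          (Set.range (TensorAlgebra.ι k (M := V)))) ∧
      w x ∈ LieSubalgebra.lieSpan k (TensorAlgebra k V)
        (Set.range (TensorAlgebra.ι k (M := V))) ∧
      w (w x) = (n : k) • w x := by
  cases n with
  | zero => exact absurd hn (by omega)
  | succ m =>
    intro x hx
    have key : ∀ y ∈ Submodule.span k (genSet (m + 1)),
        w y = theta y ∧
        theta y ∈ LieSubalgebra.lieSpan k (TensorAlgebra k V)
          (Set.range (TensorAlgebra.ι k (M := V))) ∧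
        theta y ∈ (LinearMap.range (TensorAlgebra.ι k (M := V)) ^ (m + 1) :
          Submodule k (TensorAlgebra k V)) := by
      intro y hy
      refine Submodule.span_induction ?_ ?_ ?_ ?_ hy
      · rintro z ⟨v, rfl⟩
        refine ⟨?_, ?_, ?_⟩
        · rw [hw v, lnb_gen, theta_gen]
        · rw [theta_gen]
          exact foldl_mem_lieSpan _ _ (LieSubalgebra.subset_lieSpan ⟨v 0, rfl⟩)
        · rw [theta_gen]
          have h1 := foldl_mem_pow (List.ofFn fun i : Fin m => v i.succ) 1
            (TensorAlgebra.ι k (v 0))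
            (by rw [pow_one]; exact LinearMap.mem_range_self _ (v 0))
          have hlen : 1 + (List.ofFn fun i : Fin m => v i.succ).length = m + 1 := by
            rw [List.length_ofFn]; omega
          rw [hlen] at h1
          exact h1
      · exact ⟨by rw [map_zero, map_zero], by rw [map_zero]; exact zero_mem _,
          by rw [map_zero]; exact zero_mem _⟩
      · rintro y z _ _ ⟨hy1, hy2, hy3⟩ ⟨hz1, hz2, hz3⟩
        exact ⟨by rw [map_add, map_add, hy1, hz1], by rw [map_add]; exact add_mem hy2 hz2,
          by rw [map_add]; exact add_mem hy3 hz3⟩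
      · rintro c y _ ⟨hy1, hy2, hy3⟩
        exact ⟨by rw [map_smul, map_smul, hy1],
          by rw [map_smul]; exact Submodule.smul_mem _ c hy2,
          by rw [map_smul]; exact Submodule.smul_mem _ c hy3⟩
    obtain ⟨hwx, hlx, hpx⟩ := key x (pow_le_span _ hx)
    have hne : ((m + 1 : ℕ) : k) ≠ 0 := Nat.cast_ne_zero.mpr (Nat.succ_ne_zero m)
    refine ⟨⟨?_, ?_⟩, ?_, ?_⟩
    · intro h
      rw [sub_eq_zero] at h
      have hx' : x = ((m + 1 : ℕ) : k)⁻¹ • (((m + 1 : ℕ) : k) • x) := by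
        rw [smul_smul, inv_mul_cancel₀ hne, one_smul]
      rw [hx', h, hwx]
      exact Submodule.smul_mem (LieSubalgebra.lieSpan k (TensorAlgebra k V)
        (Set.range (TensorAlgebra.ι k (M := V)))).toSubmodule _ hlx
    · intro hxl
      rw [hwx, theta_eq_Dd x hxl, Dd_pow x hx, sub_self]
    · rw [hwx]; exact hlx
    · obtain ⟨hw2, hl2, _⟩ := key (theta x) (pow_le_span _ hpx)
      rw [hwx, hw2, theta_eq_Dd _ hlx, Dd_pow _ hpx]
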